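/- Let G be a finite DAG and K a CLIC of G. For α, β ∈ I_K^G, define D_{α,β} = {v ∈ Dom(α) : α|_{C_v} ∈ Restr(β, K)} and α ∧ β = α|_{D_{α,β}}. Then D_{α,β} is a downward-closed subset of Dom(α), and α ∧ β ∼_K β ∧ α. -/

import Mathlib

/-- A set `C` of vertices is downward-closed for the strict order `prec`. -/
def IsDownClosed {V : Type*} (prec : V → V → Prop) (C : Set V) : Prop :=
  ∀ ⦃v w : V⦄, prec v w → w ∈ C → v ∈ C

/-- The closure `C_v = {w : w ⪯ v}` of a single vertex. -/
def vertexClosure {V : Type*} (prec : V → V → Prop) (v : V) : Set V :=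
  {w | w = v ∨ prec w v}

/-- A local isomorphism of the DAG `(V, E)`: a directed-graph isomorphism
`κ : C_src → C_tgt` between closures of single vertices. -/
structure LocalIso {V : Type*} (E : V → V → Prop) where
  src : V
  tgt : V
  toFun : V → V
  bijOn : Set.BijOn toFun (vertexClosure (Relation.TransGen E) src)
    (vertexClosure (Relation.TransGen E) tgt)
  mapsSrc : toFun src = tgt
  edgeIff : ∀ a ∈ vertexClosure (Relation.TransGen E) src,
    ∀ b ∈ vertexClosure (Relation.TransGen E) src, (E a b ↔ E (toFun a) (toFun b))

/-- A consistent local isomorphism class (CLIC): a collection of local isomorphisms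
containing all identities, closed under inversion, composition and restriction to the
closure of any vertex of the domain, and containing every local isomorphism which
agrees pointwise with members of `K`. -/
structure IsCLIC {V : Type*} (E : V → V → Prop) (K : Set (LocalIso E)) : Prop where
  mem_id : ∀ v : V, ∃ κ ∈ K, κ.src = v ∧ κ.tgt = v ∧
    ∀ u ∈ vertexClosure (Relation.TransGen E) v, κ.toFun u = u
  mem_inv : ∀ κ ∈ K, ∃ κ' ∈ K, κ'.src = κ.tgt ∧ κ'.tgt = κ.src ∧
    ∀ u ∈ vertexClosure (Relation.TransGen E) κ.src, κ'.toFun (κ.toFun u) = u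
  mem_comp : ∀ κ₁ ∈ K, ∀ κ₂ ∈ K, κ₁.tgt = κ₂.src →
    ∃ κ₃ ∈ K, κ₃.src = κ₁.src ∧ κ₃.tgt = κ₂.tgt ∧
      ∀ u ∈ vertexClosure (Relation.TransGen E) κ₁.src,
        κ₃.toFun u = κ₂.toFun (κ₁.toFun u)
  mem_restrict : ∀ κ ∈ K, ∀ u ∈ vertexClosure (Relation.TransGen E) κ.src,
    ∃ κ' ∈ K, κ'.src = u ∧ κ'.tgt = κ.toFun u ∧
      ∀ a ∈ vertexClosure (Relation.TransGen E) u, κ'.toFun a = κ.toFun a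
  mem_saturate : ∀ κ : LocalIso E,
    (∀ u ∈ vertexClosure (Relation.TransGen E) κ.src,
      ∃ κ' ∈ K, κ'.src = u ∧ κ'.tgt = κ.toFun u) → κ ∈ K


/-- A partially-defined index: a function together with its intended domain
(values outside `dom` are irrelevant). -/
structure IndexOn (V : Type*) where
  dom : Set V
  val : V → ℕ

/-- Membership in `I_K^G`: the domain is downward-closed and no non-identity local
isomorphism of `K` fixes a restriction `α|_{C_v}`. -/
def MemIK {V : Type*} (E : V → V → Prop) (K : Set (LocalIso E)) (α : IndexOn V) : Prop :=
  IsDownClosed (Relation.TransGen E) α.dom ∧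
  ∀ v ∈ α.dom, ∀ κ ∈ K, κ.src = v →
    (¬ ∀ u ∈ vertexClosure (Relation.TransGen E) v, κ.toFun u = u) →
    ¬ ∀ u ∈ vertexClosure (Relation.TransGen E) v, α.val (κ.toFun u) = α.val u

/-- The equivalence `α ∼_K β` on indices: a bijection `φ : Dom α → Dom β` such that for
each `v ∈ Dom α` some `κ ∈ K` carries `α|_{C_v}` to `β|_{C_{φ v}}`. -/
def IndexEquiv {V : Type*} (E : V → V → Prop) (K : Set (LocalIso E))
    (α β : IndexOn V) : Prop :=
  ∃ φ : V → V, Set.BijOn φ α.dom β.dom ∧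
    ∀ v ∈ α.dom, ∃ κ ∈ K, κ.src = v ∧ κ.tgt = φ v ∧
      ∀ u ∈ vertexClosure (Relation.TransGen E) v, β.val (κ.toFun u) = α.val u

/-- `D_{α,β}`: the set of `v ∈ Dom α` such that `α|_{C_v}` is `∼_K`-equivalent to a
restriction of `β` to a downward-closed subset of its domain. -/
def DSet {V : Type*} (E : V → V → Prop) (K : Set (LocalIso E)) (α β : IndexOn V) :
    Set V :=
  {v | v ∈ α.dom ∧ ∃ C : Set V, IsDownClosed (Relation.TransGen E) C ∧ C ⊆ β.dom ∧
    IndexEquiv E K ⟨vertexClosure (Relation.TransGen E) v, α.val⟩ ⟨C, β.val⟩}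

/-- `α ∧ β`: the restriction of `α` to `D_{α,β}`. -/
def wedge {V : Type*} (E : V → V → Prop) (K : Set (LocalIso E)) (α β : IndexOn V) :
    IndexOn V :=
  ⟨DSet E K α β, α.val⟩

section Aux

variable {V : Type*} {E : V → V → Prop} {K : Set (LocalIso E)}

local notation "Cl" => vertexClosure (Relation.TransGen E)

lemma mem_cl_self (v : V) : v ∈ Cl v := Or.inl rfl

lemma cl_down (v : V) : IsDownClosed (Relation.TransGen E) (Cl v) := by
  intro a b hab hb
  rcases hb with rfl | h
  · exact Or.inr hab
  · exact Or.inr (hab.trans h)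

lemma cl_subset {u v : V} (hu : u ∈ Cl v) : Cl u ⊆ Cl v := by
  intro a ha
  rcases ha with rfl | h
  · exact hu
  · rcases hu with rfl | h'
    · exact Or.inr h
    · exact Or.inr (h.trans h')

lemma fix_id {β : IndexOn V} (hβ : MemIK E K β) {κ : LocalIso E} (hκ : κ ∈ K)
    (hs : κ.src ∈ β.dom)
    (hvals : ∀ u ∈ Cl κ.src, β.val (κ.toFun u) = β.val u) :
    ∀ u ∈ Cl κ.src, κ.toFun u = u := by
  by_contra h
  exact hβ.2 κ.src hs κ hκ rfl h hvals

lemma uniq_tgt (hK : IsCLIC E K) {β : IndexOn V} (hβ : MemIK E K β)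
    {κ₁ κ₂ : LocalIso E} (h₁ : κ₁ ∈ K) (h₂ : κ₂ ∈ K)
    (hs : κ₁.src = κ₂.src) (ht₁ : κ₁.tgt ∈ β.dom)
    (hvals : ∀ u ∈ Cl κ₁.src, β.val (κ₁.toFun u) = β.val (κ₂.toFun u)) :
    κ₁.tgt = κ₂.tgt := by
  obtain ⟨κ₁', hK', hs', ht', hinv⟩ := hK.mem_inv κ₁ h₁
  obtain ⟨κ₃, hK₃, hs₃, ht₃, hcomp⟩ := hK.mem_comp κ₁' hK' κ₂ h₂ (ht'.trans hs)
  have hsrc₃ : κ₃.src = κ₁.tgt := hs₃.trans hs'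
  have hvals₃ : ∀ a ∈ Cl κ₃.src, β.val (κ₃.toFun a) = β.val a := by
    intro a ha
    rw [hsrc₃] at ha
    obtain ⟨u, hu, rfl⟩ := κ₁.bijOn.surjOn ha
    have ha' : κ₁.toFun u ∈ Cl κ₁'.src := by rw [hs']; exact ha
    rw [hcomp _ ha', hinv u hu, ← hvals u hu]
  have hid := fix_id hβ hK₃ (by rw [hsrc₃]; exact ht₁) hvals₃ κ₃.src (mem_cl_self _)
  rw [κ₃.mapsSrc] at hid
  rw [← ht₃, hid, hsrc₃]

lemma inv_witness (hK : IsCLIC E K) {α β : IndexOn V} {κ : LocalIso E}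
    (hκ : κ ∈ K)
    (hvals : ∀ u ∈ Cl κ.src, β.val (κ.toFun u) = α.val u) :
    ∃ κ' ∈ K, κ'.src = κ.tgt ∧ κ'.tgt = κ.src ∧
      ∀ a ∈ Cl κ.tgt, α.val (κ'.toFun a) = β.val a := by
  obtain ⟨κ', hK', hs', ht', hinv⟩ := hK.mem_inv κ hκ
  refine ⟨κ', hK', hs', ht', ?_⟩
  intro a ha
  obtain ⟨u, hu, rfl⟩ := κ.bijOn.surjOn ha
  rw [hinv u hu, ← hvals u hu]

lemma memDSet_of_witness {α β : IndexOn V} (hK : IsCLIC E K)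
    (hβdom : IsDownClosed (Relation.TransGen E) β.dom)
    {κ : LocalIso E} (hv : κ.src ∈ α.dom) (hκ : κ ∈ K)
    (ht : κ.tgt ∈ β.dom)
    (hvals : ∀ u ∈ Cl κ.src, β.val (κ.toFun u) = α.val u) :
    κ.src ∈ DSet E K α β := by
  refine ⟨hv, Cl κ.tgt, cl_down _, ?_, κ.toFun, κ.bijOn, ?_⟩
  · intro a ha
    rcases ha with rfl | h
    · exact ht
    · exact hβdom h ht
  · intro a ha
    obtain ⟨κ', hK', hs', ht', hagree⟩ := hK.mem_restrict κ hκ a ha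
    refine ⟨κ', hK', hs', ht', fun u hu => ?_⟩
    rw [hagree u hu]
    exact hvals u (cl_subset ha hu)

lemma witness_of_memDSet {α β : IndexOn V} {v : V} (h : v ∈ DSet E K α β) :
    v ∈ α.dom ∧ ∃ κ ∈ K, κ.src = v ∧ κ.tgt ∈ β.dom ∧
      ∀ u ∈ Cl v, β.val (κ.toFun u) = α.val u := by
  obtain ⟨hv, C, _, hC, φ, hbij, hall⟩ := h
  obtain ⟨κ, hκ, hs, ht, hvals⟩ := hall v (mem_cl_self v)
  refine ⟨hv, κ, hκ, hs, ?_, hvals⟩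
  rw [ht]
  exact hC (hbij.mapsTo (mem_cl_self v))

end Aux

/-- `D_{α,β}` is downward-closed in `Dom α` and `α ∧ β ∼_K β ∧ α`. -/
theorem stmt15 {V : Type*} [Fintype V] (E : V → V → Prop)
    (hacyc : ∀ v : V, ¬ Relation.TransGen E v v)
    (K : Set (LocalIso E)) (hK : IsCLIC E K)
    (α β : IndexOn V) (hα : MemIK E K α) (hβ : MemIK E K β) :
    (DSet E K α β ⊆ α.dom ∧ IsDownClosed (Relation.TransGen E) (DSet E K α β)) ∧
    IndexEquiv E K (wedge E K α β) (wedge E K β α) := by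
  classical
  constructor
  · refine ⟨fun v hv => hv.1, ?_⟩
    intro v w hvw hw
    obtain ⟨hwα, κ, hκ, hs, ht, hvals⟩ := witness_of_memDSet hw
    subst hs
    have hvCl : v ∈ vertexClosure (Relation.TransGen E) κ.src := Or.inr hvw
    obtain ⟨κ', hK', hs', ht', hagree⟩ := hK.mem_restrict κ hκ v hvCl
    have hv' : κ'.src ∈ α.dom := by rw [hs']; exact hα.1 hvw hwα
    have ht'' : κ'.tgt ∈ β.dom := by
      rw [ht']
      have hmem : κ.toFun v ∈ vertexClosure (Relation.TransGen E) κ.tgt :=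
        κ.bijOn.mapsTo hvCl
      rcases hmem with h | h
      · exact h ▸ ht
      · exact hβ.1 h ht
    have := memDSet_of_witness hK hβ.1 hv' hK' ht'' (by
      intro u hu
      rw [hs'] at hu
      rw [hagree u hu]
      exact hvals u (cl_subset hvCl hu))
    rwa [hs'] at this
  · have hW : ∀ v, v ∈ DSet E K α β → ∃ κ : LocalIso E, κ ∈ K ∧ κ.src = v ∧
        κ.tgt ∈ β.dom ∧
        ∀ u ∈ vertexClosure (Relation.TransGen E) v, β.val (κ.toFun u) = α.val u := by
      intro v hv
      obtain ⟨_, κ, h1, h2, h3, h4⟩ := witness_of_memDSet hv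
      exact ⟨κ, h1, h2, h3, h4⟩
    choose f hfK hfs hft hfvals using hW
    refine ⟨fun v => if h : v ∈ DSet E K α β then (f v h).tgt else v, ⟨?_, ?_, ?_⟩, ?_⟩
    · -- MapsTo
      intro v hmem0
      have h : v ∈ DSet E K α β := hmem0
      show (if h : v ∈ DSet E K α β then (f v h).tgt else v) ∈ DSet E K β α
      simp only [dif_pos h]
      obtain ⟨κ', hK', hs', ht', hvals'⟩ :=
        inv_witness hK (α := α) (β := β) (hfK v h) (by rw [hfs v h]; exact hfvals v h)
      have hmem := memDSet_of_witness hK hα.1 (α := β) (β := α)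
        (by rw [hs']; exact hft v h) hK'
        (by rw [ht', hfs v h]; exact h.1)
        (by intro u hu; rw [hs'] at hu; exact hvals' u hu)
      rwa [hs'] at hmem
    · -- InjOn
      intro v₁ hm₁ v₂ hm₂ heq
      have h₁ : v₁ ∈ DSet E K α β := hm₁
      have h₂ : v₂ ∈ DSet E K α β := hm₂
      simp only [dif_pos h₁, dif_pos h₂] at heq
      obtain ⟨κ₂', hK₂', hs₂', ht₂', hvals₂'⟩ :=
        inv_witness hK (α := α) (β := β) (hfK v₂ h₂) (by rw [hfs v₂ h₂]; exact hfvals v₂ h₂)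
      obtain ⟨μ, hμK, hμs, hμt, hμcomp⟩ :=
        hK.mem_comp (f v₁ h₁) (hfK v₁ h₁) κ₂' hK₂' (by rw [hs₂', heq])
      have hμvals : ∀ u ∈ vertexClosure (Relation.TransGen E) μ.src,
          α.val (μ.toFun u) = α.val u := by
        intro u hu
        rw [hμs] at hu
        have hmem : (f v₁ h₁).toFun u ∈
            vertexClosure (Relation.TransGen E) (f v₂ h₂).tgt := by
          rw [← heq]; exact (f v₁ h₁).bijOn.mapsTo hu
        rw [hμcomp u hu]
        have := hvals₂' ((f v₁ h₁).toFun u) hmem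
        rw [this]
        have hu' : u ∈ vertexClosure (Relation.TransGen E) v₁ := by
          rw [← hfs v₁ h₁]; exact hu
        exact hfvals v₁ h₁ u hu'
      have hμsrc : μ.src ∈ α.dom := by rw [hμs, hfs v₁ h₁]; exact h₁.1
      have hid := fix_id hα hμK hμsrc hμvals μ.src (mem_cl_self _)
      rw [μ.mapsSrc] at hid
      have : v₂ = v₁ := by
        rw [← hfs v₂ h₂, ← ht₂', ← hμt, hid, hμs, hfs v₁ h₁]
      exact this.symm
    · -- SurjOn
      intro t htm
      have ht : t ∈ DSet E K β α := htm
      obtain ⟨htβ, lam, hlamK, hlams, hlamt, hlamvals⟩ :=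
        witness_of_memDSet (α := β) (β := α) ht
      obtain ⟨lam', hlam'K, hlam's, hlam't, hlam'vals⟩ :=
        inv_witness hK (α := β) (β := α) hlamK (by rw [hlams]; exact hlamvals)
      have hD : lam'.src ∈ DSet E K α β :=
        memDSet_of_witness hK hβ.1 (by rw [hlam's]; exact hlamt) hlam'K
          (by rw [hlam't, hlams]; exact htβ)
          (by intro u hu; rw [hlam's] at hu; exact hlam'vals u hu)
      refine ⟨lam'.src, hD, ?_⟩
      simp only [dif_pos hD]
      have huniq := uniq_tgt hK hβ (hfK _ hD) hlam'K
        ((hfs _ hD).trans rfl) (hft _ hD)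
        (by
          intro u hu
          rw [hfs _ hD] at hu
          have hu' : u ∈ vertexClosure (Relation.TransGen E) lam.tgt := by
            rw [← hlam's]; exact hu
          rw [hfvals _ hD u hu, hlam'vals u hu'])
      rw [huniq, hlam't, hlams]
    · -- pointwise witnesses
      intro v hm
      have h : v ∈ DSet E K α β := hm
      refine ⟨f v h, hfK v h, hfs v h, ?_, fun u hu => hfvals v h u hu⟩
      simp only [dif_pos h]
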